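/- There exists a constant C > 0 such that for all k, j ∈ ℤ with k ≠ 0 and j ≠ 0, all η ∈ ℝ and all t > 0 with t² > √(k²+η²), one has (1/(k²+η²)^{1/4})·1/((1+(η/j − t)²)·(1+(k−j)²)^{3/2}) ≤ C/|k|. -/
import Mathlib

private lemma M2_aux1 (x S : ℝ) (hS : 0 ≤ S) (h : S^2 = 1 + x^2) : 1 + |x| ≤ 2*S := by
  nlinarith [sq_abs x, abs_nonneg x, sq_nonneg (|x| - 1)]

private lemma M2_aux2 (a b x S : ℝ) (h5 : a ≤ b + x) (hb : 1 ≤ b) (hx : 0 ≤ x)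
    (h6 : 1 + x ≤ 2*S) : a ≤ 2 * b * S := by nlinarith

/-- Estimate (A.3): there is `C > 0` such that for `k, j ∈ ℤ∖{0}`, `η ∈ ℝ`, `t > 0` with
`t² > √(k²+η²)`,
`(1/(k²+η²)^{1/4})·1/((1+(η/j − t)²)·(1+(k−j)²)^{3/2}) ≤ C/|k|`. -/
theorem M2_estimate : ∃ C : ℝ, 0 < C ∧
    ∀ k j : ℤ, k ≠ 0 → j ≠ 0 → ∀ η t : ℝ, 0 < t →
      Real.sqrt ((k : ℝ) ^ 2 + η ^ 2) < t ^ 2 →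
      (1 / ((k : ℝ) ^ 2 + η ^ 2) ^ ((1 : ℝ) / 4)) *
        (1 / ((1 + (η / (j : ℝ) - t) ^ 2) * (1 + ((k : ℝ) - (j : ℝ)) ^ 2) ^ ((3 : ℝ) / 2)))
      ≤ C / |(k : ℝ)| := by
  refine ⟨4, by norm_num, ?_⟩
  intro k j hk hj η t ht hlt
  have hkR : (k : ℝ) ≠ 0 := Int.cast_ne_zero.mpr hk
  have hjR : (j : ℝ) ≠ 0 := Int.cast_ne_zero.mpr hj
  have hk1 : (1:ℝ) ≤ |(k:ℝ)| := by
    calc (1:ℝ) ≤ ((|k| : ℤ) : ℝ) := by exact_mod_cast Int.one_le_abs hk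
    _ = |(k:ℝ)| := by push_cast; ring
  have hj1 : (1:ℝ) ≤ |(j:ℝ)| := by
    calc (1:ℝ) ≤ ((|j| : ℤ) : ℝ) := by exact_mod_cast Int.one_le_abs hj
    _ = |(j:ℝ)| := by push_cast; ring
  have hApos : (0:ℝ) < (k:ℝ)^2 + η^2 := by positivity
  have hA1 : (1:ℝ) ≤ (k:ℝ)^2 + η^2 := by nlinarith [sq_abs ((k:ℝ)), sq_nonneg η]
  have hA4 : 1 ≤ ((k:ℝ)^2 + η^2) ^ ((1:ℝ)/4) := Real.one_le_rpow hA1 (by norm_num)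
  have hBpos : (0:ℝ) < 1 + (η / (j:ℝ) - t)^2 := by positivity
  have hB1 : (1:ℝ) ≤ 1 + (η / (j:ℝ) - t)^2 := le_add_of_nonneg_right (sq_nonneg _)
  have hDbase : (1:ℝ) ≤ 1 + ((k:ℝ) - (j:ℝ))^2 := le_add_of_nonneg_right (sq_nonneg _)
  have hD1 : 1 ≤ (1 + ((k:ℝ) - (j:ℝ))^2) ^ ((3:ℝ)/2) := Real.one_le_rpow hDbase (by norm_num)
  have hDpos : 0 < (1 + ((k:ℝ) - (j:ℝ))^2) ^ ((3:ℝ)/2) := lt_of_lt_of_le one_pos hD1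
  have hA4pos : 0 < ((k:ℝ)^2 + η^2) ^ ((1:ℝ)/4) := lt_of_lt_of_le one_pos hA4
  set P : ℝ := ((k:ℝ)^2 + η^2) ^ ((1:ℝ)/4) with hPdef
  set Q : ℝ := (1 + ((k:ℝ) - (j:ℝ))^2) ^ ((3:ℝ)/2) with hQdef
  set B : ℝ := 1 + (η / (j:ℝ) - t)^2 with hBdef
  clear_value P Q B
  -- reduce to |k| ≤ 4 * (P * (B * Q))
  rw [one_div_mul_one_div, div_le_div_iff₀ (by positivity) (lt_of_lt_of_le one_pos hk1),
    one_mul]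
  have hsqA_k : |(k:ℝ)| ≤ Real.sqrt ((k:ℝ)^2 + η^2) := by
    rw [← Real.sqrt_sq_eq_abs]
    exact Real.sqrt_le_sqrt (by linarith [sq_nonneg η])
  rcases le_or_gt (t/2) |η/(j:ℝ) - t| with hcase | hcase
  · -- B ≥ t²/4 > √A/4 ≥ |k|/4
    have hB : |(k:ℝ)| / 4 ≤ B := by
      have h1 : t^2/4 ≤ (η/(j:ℝ) - t)^2 := by
        nlinarith [sq_abs (η/(j:ℝ) - t), sq_nonneg (|η/(j:ℝ) - t| - t/2)]
      have h2 : |(k:ℝ)| < t^2 := lt_of_le_of_lt hsqA_k hlt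
      rw [hBdef]; linarith
    have hchain : (1:ℝ) * (|(k:ℝ)|/4 * 1) ≤ P * (B * Q) :=
      mul_le_mul hA4 (mul_le_mul hB hD1 zero_le_one hBpos.le)
        (by positivity) hA4pos.le
    nlinarith [hchain]
  · -- η/j close to t
    have h2 := abs_lt.mp hcase
    have hηj : t/2 < η/(j:ℝ) := by linarith [h2.1]
    have hjabs : (0:ℝ) < |(j:ℝ)| := abs_pos.mpr hjR
    have hη : t/2 * |(j:ℝ)| < |η| := by
      have habs : |η/(j:ℝ)| * |(j:ℝ)| = |η| := by
        rw [abs_div, div_mul_cancel₀ _ (abs_ne_zero.mpr hjR)]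
      have h3 : t/2 * |(j:ℝ)| < |η/(j:ℝ)| * |(j:ℝ)| :=
        mul_lt_mul_of_pos_right (lt_of_lt_of_le hηj (le_abs_self _)) hjabs
      linarith [habs ▸ h3]
    have hηA : |η| ≤ Real.sqrt ((k:ℝ)^2 + η^2) := by
      rw [← Real.sqrt_sq_eq_abs]
      exact Real.sqrt_le_sqrt (by linarith [sq_nonneg (k:ℝ)])
    have hηt2 : |η| < t^2 := lt_of_le_of_lt hηA hlt
    have hjt : |(j:ℝ)| < 2 * t := by nlinarith
    have hηj2 : |(j:ℝ)|^2 / 4 < |η| := by nlinarith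
    -- P ≥ |j|/2
    have hA4j : |(j:ℝ)| / 2 ≤ P := by
      have h4 : (|(j:ℝ)|/2)^4 ≤ (k:ℝ)^2 + η^2 := by
        calc (|(j:ℝ)|/2)^4 = (|(j:ℝ)|^2/4)^2 := by ring
        _ ≤ |η|^2 := pow_le_pow_left₀ (by positivity) hηj2.le 2
        _ = η^2 := sq_abs η
        _ ≤ (k:ℝ)^2 + η^2 := le_add_of_nonneg_left (sq_nonneg _)
      calc |(j:ℝ)|/2 = ((|(j:ℝ)|/2)^4) ^ ((1:ℝ)/4) := by
            rw [← Real.rpow_natCast (|(j:ℝ)|/2) 4, ← Real.rpow_mul (by positivity)]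
            norm_num
        _ ≤ P := by rw [hPdef]; exact Real.rpow_le_rpow (by positivity) h4 (by norm_num)
    -- √(1+(k-j)²) ≤ Q
    set S : ℝ := Real.sqrt (1 + ((k:ℝ) - (j:ℝ))^2) with hSdef
    have hSQ : S ≤ Q := by
      rw [hSdef, Real.sqrt_eq_rpow, hQdef]
      exact Real.rpow_le_rpow_of_exponent_le hDbase (by norm_num)
    have hSpos : 0 < S := Real.sqrt_pos.mpr (by positivity)
    have hS2 : S^2 = 1 + ((k:ℝ) - (j:ℝ))^2 := Real.sq_sqrt (by positivity)
    clear_value S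
    have hkS : |(k:ℝ)| ≤ 2 * |(j:ℝ)| * S := by
      have h5 : |(k:ℝ)| ≤ |(j:ℝ)| + |(k:ℝ) - (j:ℝ)| := by
        have := abs_add_le ((j:ℝ)) ((k:ℝ) - (j:ℝ))
        simpa using this
      exact M2_aux2 _ _ _ _ h5 hj1 (abs_nonneg _)
        (M2_aux1 _ _ hSpos.le hS2)
    have h7 : (|(j:ℝ)|/2) * (1 * S) ≤ P * (B * Q) :=
      mul_le_mul hA4j (mul_le_mul hB1 hSQ hSpos.le hBpos.le) (by positivity) hA4pos.le
    linarith [h7, hkS]
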